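/- Let ν be a measure on a measurable space S, let f, g : S → ℝ≥0∞ be measurable, and let λ = ν.withDensity f and μ = ν.withDensity g be finite measures. Then the following are equivalent: (a) λ and μ are mutually singular (λ ⟂ μ); (b) μ {x | f x = 0} = μ(Set.univ); (c) λ {x | g x = 0} = λ(Set.univ). (Statements (b) and (c) say that the order-0 Tsallis divergences satisfy T₀(λ‖μ) = μ(S) and T₀(μ‖λ) = λ(S).) -/

import Mathlib

open MeasureTheory

lemma aux_mutuallySingular_withDensity {S : Type*} [MeasurableSpace S]
    (ν : Measure S) (f : S → ENNReal) (hf : Measurable f)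
    (μ : Measure S) (hμν : μ ≪ ν) :
    ν.withDensity f ⟂ₘ μ ↔ μ {x | f x ≠ 0} = 0 := by
  constructor
  · rintro ⟨s, hs, h1, h2⟩
    rw [withDensity_apply f hs, lintegral_eq_zero_iff hf] at h1
    have hν : ν ({x | f x ≠ 0} ∩ s) = 0 := by
      have := ae_iff.mp h1
      simp only [Pi.zero_apply] at this
      rw [Measure.restrict_apply
        (show MeasurableSet {a | ¬ f a = 0} from (hf (measurableSet_singleton 0)).compl)] at this
      exact this
    have : μ {x | f x ≠ 0} ≤ μ ({x | f x ≠ 0} ∩ s) + μ sᶜ := by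
      calc μ {x | f x ≠ 0} ≤ μ (({x | f x ≠ 0} ∩ s) ∪ sᶜ) := by
            apply measure_mono; intro x hx
            by_cases hxs : x ∈ s
            · exact Or.inl ⟨hx, hxs⟩
            · exact Or.inr hxs
        _ ≤ _ := measure_union_le _ _
    simpa [hμν hν, h2] using this
  · intro h
    have hms : MeasurableSet {x | f x = 0} := hf (measurableSet_singleton 0)
    refine ⟨{x | f x = 0}, hms, ?_, ?_⟩
    · rw [withDensity_apply f hms]
      rw [setLIntegral_eq_zero_iff hms hf]
      exact Filter.Eventually.of_forall fun x hx => hx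
    · simpa [Set.compl_setOf] using h

lemma aux_eq_univ_iff {S : Type*} [MeasurableSpace S] (μ : Measure S) [IsFiniteMeasure μ]
    {s : Set S} (hs : MeasurableSet s) : μ s = μ Set.univ ↔ μ sᶜ = 0 := by
  have hadd : μ s + μ sᶜ = μ Set.univ := measure_add_measure_compl hs
  constructor
  · intro h
    have h2 : μ s + μ sᶜ = μ s + 0 := by rw [hadd, h, add_zero]
    exact (ENNReal.add_right_inj (measure_ne_top μ s)).mp h2
  · intro h
    rw [← hadd, h, add_zero]

/-- For finite measures `λ, μ` with densities `f = dλ/dν`, `g = dμ/dν`, the following are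
equivalent: (a) `λ ⟂ μ`; (b) `T₀(λ‖μ) = μ{f = 0} = μ(S)`; (c) `T₀(μ‖λ) = λ{g = 0} = λ(S)`. -/
theorem mutuallySingular_iff_tsallis_zero {S : Type*} [MeasurableSpace S]
    (ν : Measure S) (f g : S → ENNReal) (hf : Measurable f) (hg : Measurable g)
    (lam mu : Measure S) (hlam : lam = ν.withDensity f) (hmu : mu = ν.withDensity g)
    [IsFiniteMeasure lam] [IsFiniteMeasure mu] :
    (lam ⟂ₘ mu ↔ mu {x | f x = 0} = mu Set.univ) ∧
    (lam ⟂ₘ mu ↔ lam {x | g x = 0} = lam Set.univ) := by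
  have hlν : lam ≪ ν := hlam ▸ withDensity_absolutelyContinuous ν f
  have hmν : mu ≪ ν := hmu ▸ withDensity_absolutelyContinuous ν g
  have h1 : lam ⟂ₘ mu ↔ mu {x | f x ≠ 0} = 0 := by
    rw [hlam]; exact aux_mutuallySingular_withDensity ν f hf mu hmν
  have h2 : lam ⟂ₘ mu ↔ lam {x | g x ≠ 0} = 0 := by
    rw [Measure.MutuallySingular.comm, hmu]
    exact aux_mutuallySingular_withDensity ν g hg lam hlν
  have e1 := aux_eq_univ_iff mu (show MeasurableSet {x | f x = 0} from hf (measurableSet_singleton 0))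
  have e2 := aux_eq_univ_iff lam (show MeasurableSet {x | g x = 0} from hg (measurableSet_singleton 0))
  constructor
  · rw [h1, e1]
    simp [Set.compl_setOf]
  · rw [h2, e2]
    simp [Set.compl_setOf]
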